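/- arXiv:1503.08995 — 2 statements merged into one kernel-verified Lean document; each statement's English description precedes it below -/
import Mathlib

section
/- Let x ∈ ST_n^r, p ≥ 1, and 0 < l_1 < l_2 < … < l_p < r. Then x^{(l_1,…,l_p)} ∈ ST_n^r, λ(x^{(l_1,…,l_p)}) = λ(x), and M(x^{(l_1,…,l_p)}) ≤ M(x) for the lexicographic order on λ(x)-tuples of natural numbers. -/
open scoped TensorProduct

namespace SurjPerm

/-- The maximal value of a word (the `r` such that a surjection lands in `{1,…,r}`). -/
def rk (l : List ℕ) : ℕ := l.foldr max 0

/-- `l` is (the list of values of) a surjective map `{1,…,n} → {1,…,r}`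
    with `n = l.length ≥ 1` and `r = rk l`. -/
def IsST (l : List ℕ) : Prop := l ≠ [] ∧ ∀ k, k ∈ l ↔ 1 ≤ k ∧ k ≤ rk l

/-- membership in `ST_n^r`. -/
def memST (l : List ℕ) (n r : ℕ) : Prop := IsST l ∧ l.length = n ∧ rk l = r

/-- concatenation `x × y`. -/
def cat (x y : List ℕ) : List ℕ := x ++ y.map (· + rk x)

/-- iterated concatenation `x¹ × x² × … × xᵖ`. -/
def catAll (l : List (List ℕ)) : List ℕ := l.foldr cat []

/-- standardization of a word. -/
def stdList (l : List ℕ) : List ℕ := l.map fun v => (l.dedup.filter (· ≤ v)).length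

/-- corestriction `x|^K`. -/
def corestrict (x : List ℕ) (K : Finset ℕ) : List ℕ := stdList (x.filter (· ∈ K))

/-- the `i`-th entry of a word, `1`-indexed: `ent f i = f(i)`. -/
def ent (l : List ℕ) (i : ℕ) : ℕ := l.getD (i - 1) 0

/-- composition `f ∘ x` of the map (word) `f` with the map (word) `x`. -/
def wcomp (f x : List ℕ) : List ℕ := x.map fun v => ent f v

/-- the identity permutation `1_n` as a word. -/
def idW (n : ℕ) : List ℕ := (List.range n).map (· + 1)

/-- the permutation `ε(r₁,…,r_p)` as a word: the `i`-th block of positions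
    carries the values shifted above all later blocks. -/
def epsW : List ℕ → List ℕ
  | [] => []
  | r :: rs => ((List.range r).map (· + rs.sum + 1)) ++ epsW rs

/-- `x \ y := ε(r,s) ∘ (x × y)`. -/
def bsl (x y : List ℕ) : List ℕ := wcomp (epsW [rk x, rk y]) (cat x y)

/-- `f` is strictly increasing on each block of the composition `ns`. -/
def blockIncr (ns f : List ℕ) : Prop :=
  ∀ k, k < ns.length → ∀ i j, (ns.take k).sum < i → i < j → j ≤ (ns.take (k + 1)).sum →
    ent f i < ent f j

/-- `(n₁,…,n_p)`-stuffles. -/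
def IsStuffle (ns f : List ℕ) : Prop := IsST f ∧ f.length = ns.sum ∧ blockIncr ns f

/-- `(n₁,…,n_p)`-shuffles: stuffles which are permutations. -/
def IsShuffle (ns f : List ℕ) : Prop := IsStuffle ns f ∧ rk f = ns.sum

/-- irreducible surjections. -/
def Irr (l : List ℕ) : Prop := IsST l ∧ ¬ ∃ g h, IsST g ∧ IsST h ∧ l = cat g h

/-- the set of irreducible surjections of arity `n`. -/
def IrrN (n : ℕ) : Set (List ℕ) := {l | Irr l ∧ l.length = n}

/-- the product `x · y` on surjections. -/
def dotW (x y : List ℕ) : List ℕ :=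
  x.map (fun v => if v < rk x then v else rk x + rk y - 1) ++
    y.map (fun v => if v < rk y then v + rk x - 1 else rk x + rk y - 1)

/-- iterated `·` product `x¹ · x² · … · xᵖ`. -/
def dotAll : List (List ℕ) → List ℕ
  | [] => []
  | a :: as => as.foldl dotW a

/-- indecomposable surjections (for the `·` product). -/
def Indec (l : List ℕ) : Prop := IsST l ∧ ¬ ∃ a b, IsST a ∧ IsST b ∧ l = dotW a b

/-- the set `𝒟`. -/
def inD (x : List ℕ) : Prop :=
  IsST x ∧ ((x = [1] ∨ x = [1, 1]) ∨
    (3 ≤ x.length ∧ Irr x ∧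
      ¬ ∃ y z, ∃ _ : y.length < x.length, inD y ∧ IsST z ∧ x = bsl y z))
termination_by x.length
decreasing_by assumption

/-- the set `𝒞`. -/
def inC (x : List ℕ) : Prop :=
  Irr x ∧
    ((∃ y z, ∃ _ : y.length < x.length, Irr y ∧ ¬ inC y ∧ IsST z ∧ x = bsl y z) ∨
      (∃ a b, IsST a ∧ IsST b ∧ x = dotW a b))
termination_by x.length
decreasing_by assumption

/-- the set `𝔅(l)`, with `𝔅(0) = 𝒟`. -/
def inBfrak (l : ℕ) (x : List ℕ) : Prop :=
  if l = 0 then inD x else ∃ u v, inD u ∧ IsST v ∧ v.length = l ∧ x = bsl u v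

/-- `t_i ∘ f`: exchange the values `i` and `i+1`. -/
def swapVal (i : ℕ) (l : List ℕ) : List ℕ :=
  l.map fun v => if v = i then i + 1 else if v = i + 1 then i else v

/-- covering relation of the weak Bruhat order on `ST_n^r`:
    `f < t_i ∘ f` whenever `f⁻¹(i) < f⁻¹(i+1)`. -/
def wBCov (f g : List ℕ) : Prop :=
  ∃ i, 1 ≤ i ∧ i + 1 ≤ rk f ∧ g = swapVal i f ∧
    ∀ a b, a < f.length → b < f.length → f.getD a 0 = i → f.getD b 0 = i + 1 → a < b

/-- strict weak Bruhat order. -/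
def wBlt : List ℕ → List ℕ → Prop := Relation.TransGen wBCov

/-- weak Bruhat order. -/
def wBle : List ℕ → List ℕ → Prop := Relation.ReflTransGen wBCov

/-- the (0-indexed) positions `j₁-1 < … < j_λ-1` where the maximal value is attained. -/
def maxPos (x : List ℕ) : List ℕ :=
  (List.range x.length).filter fun i => x.getD i 0 = rk x

/-- `λ(x)`. -/
def lam (x : List ℕ) : ℕ := (maxPos x).length

/-- `𝕄(x) = (𝕄(x)_λ, …, 𝕄(x)₁)`. -/
def Mword (x : List ℕ) : List ℕ :=
  (List.zipWith (fun a b => b - a - 1) (maxPos x) ((maxPos x).drop 1) ++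
    [x.length - (maxPos x).getLastD 0 - 1]).reverse

/-- the pieces `x|^{1..l₁}, x|^{l₁+1..l₂}, …, x|^{l_p+1..r}`. -/
def pieces (x : List ℕ) (ls : List ℕ) : List (List ℕ) :=
  ((0 :: ls).zip (ls ++ [rk x])).map fun p => corestrict x (Finset.Icc (p.1 + 1) p.2)

/-- `x^{(l₁,…,l_p)}`. -/
def xfam (x : List ℕ) (ls : List ℕ) : List ℕ := catAll (pieces x ls)

variable (𝕂 : Type) [Field 𝕂]

/-- the vector space `𝕂[ST]` (with basis all words; only the basis elements in `ST` matter). -/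
abbrev V := List ℕ →₀ 𝕂

/-- the coproduct `Δ`. -/
noncomputable def Delta : V 𝕂 →ₗ[𝕂] TensorProduct 𝕂 (V 𝕂) (V 𝕂) :=
  Finsupp.lsum 𝕂 fun x => LinearMap.toSpanSingleton 𝕂 _
    (∑ i ∈ Finset.Ico 1 (rk x),
      Finsupp.single (corestrict x (Finset.Icc 1 i)) (1 : 𝕂) ⊗ₜ[𝕂]
        Finsupp.single (corestrict x (Finset.Icc (i + 1) (rk x))) (1 : 𝕂))

/-- the subspace `𝕂[ST_n]`. -/
noncomputable def STspanN (n : ℕ) : Submodule 𝕂 (V 𝕂) :=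
  Submodule.span 𝕂 {v | ∃ l, IsST l ∧ l.length = n ∧ v = Finsupp.single l 1}

/-- `Prim(ST)_n = {v ∈ 𝕂[ST_n] : Δ v = 0}`. -/
noncomputable def PrimN (n : ℕ) : Submodule 𝕂 (V 𝕂) :=
  STspanN 𝕂 n ⊓ LinearMap.ker (Delta 𝕂)

/-- the projection `E`. -/
noncomputable def Emap : V 𝕂 →ₗ[𝕂] V 𝕂 :=
  Finsupp.lsum 𝕂 fun x => LinearMap.toSpanSingleton 𝕂 _
    (∑ᶠ ls ∈ {ls : List ℕ | ls.Chain' (· < ·) ∧ ∀ l ∈ ls, 0 < l ∧ l < rk x},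
      ((-1 : 𝕂) ^ ls.length) • Finsupp.single (xfam x ls) (1 : 𝕂))

/-- generic bilinear-on-basis operation indexed by a set of shuffles. -/
noncomputable def shOp (P : ℕ → ℕ → List ℕ → Prop) (a b : V 𝕂) : V 𝕂 :=
  Finsupp.sum a fun x cx => Finsupp.sum b fun y cy =>
    (cx * cy) • ∑ᶠ f ∈ {f : List ℕ | IsShuffle [rk x, rk y] f ∧ P (rk x) (rk y) f},
      Finsupp.single (wcomp f (cat x y)) (1 : 𝕂)

/-- the dendriform operation `≻`. -/
noncomputable def succOp : V 𝕂 → V 𝕂 → V 𝕂 :=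
  shOp 𝕂 fun r s f => ent f r < ent f (r + s)

/-- the dendriform operation `≺`. -/
noncomputable def precOp : V 𝕂 → V 𝕂 → V 𝕂 :=
  shOp 𝕂 fun r s f => ent f (r + s) < ent f r

/-- `ω^≺(y₁,…,y_k) = y₁ ≺ (y₂ ≺ (… ≺ y_k))`. -/
noncomputable def omPrec : List (V 𝕂) → V 𝕂
  | [] => 0
  | [a] => a
  | a :: as => precOp 𝕂 a (omPrec as)

/-- `ω^≻(y₁,…,y_k) = ((y₁ ≻ y₂) ≻ …) ≻ y_k`. -/
noncomputable def omSucc : List (V 𝕂) → V 𝕂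
  | [] => 0
  | a :: as => as.foldl (succOp 𝕂) a

/-- `ω^≺(l) ≻ x ≺ ω^≻(r)`, empty factors omitted. -/
noncomputable def mterm (x : V 𝕂) : List (V 𝕂) → List (V 𝕂) → V 𝕂
  | [], [] => x
  | [], r => precOp 𝕂 x (omSucc 𝕂 r)
  | l, [] => succOp 𝕂 (omPrec 𝕂 l) x
  | l, r => precOp 𝕂 (succOp 𝕂 (omPrec 𝕂 l) x) (omSucc 𝕂 r)

/-- the brace operation `M^{ST}_{1k}(x; y₁,…,y_k)`. -/
noncomputable def braceM (x : V 𝕂) (ys : List (V 𝕂)) : V 𝕂 :=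
  ∑ j ∈ Finset.range (ys.length + 1),
    ((-1 : 𝕂) ^ (ys.length - j)) • mterm 𝕂 x (ys.take j) (ys.drop j)

/-- generic bilinear-on-basis operation indexed by a set of stuffles, with `q`-weights
    `q^{s(f) - c}` where `s(f) = |f| - rk f`. -/
noncomputable def stOp (q : 𝕂) (c : ℕ) (P : ℕ → ℕ → List ℕ → Prop) (a b : V 𝕂) : V 𝕂 :=
  Finsupp.sum a fun x cx => Finsupp.sum b fun y cy =>
    (cx * cy) • ∑ᶠ f ∈ {f : List ℕ | IsStuffle [rk x, rk y] f ∧ P (rk x) (rk y) f},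
      q ^ (f.length - rk f - c) • Finsupp.single (wcomp f (cat x y)) (1 : 𝕂)

/-- `≻_q`. -/
noncomputable def succQ (q : 𝕂) : V 𝕂 → V 𝕂 → V 𝕂 :=
  stOp 𝕂 q 0 fun r s f => ent f r < ent f (r + s)

/-- `≺_q`. -/
noncomputable def precQ (q : 𝕂) : V 𝕂 → V 𝕂 → V 𝕂 :=
  stOp 𝕂 q 0 fun r s f => ent f (r + s) < ent f r

/-- `·_q`. -/
noncomputable def dotQ (q : 𝕂) : V 𝕂 → V 𝕂 → V 𝕂 :=
  stOp 𝕂 q 1 fun r s f => ent f r = ent f (r + s)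

/-- `≽_q = ≻_q + q ·_q`. -/
noncomputable def succcQ (q : 𝕂) (a b : V 𝕂) : V 𝕂 := succQ 𝕂 q a b + q • dotQ 𝕂 q a b

/-- `ω^{≺_q}`. -/
noncomputable def omPrecQ (q : 𝕂) : List (V 𝕂) → V 𝕂
  | [] => 0
  | [a] => a
  | a :: as => precQ 𝕂 q a (omPrecQ q as)

/-- `ω^{≽_q}`. -/
noncomputable def omSucccQ (q : 𝕂) : List (V 𝕂) → V 𝕂
  | [] => 0
  | a :: as => as.foldl (succcQ 𝕂 q) a

/-- `ω^{≺_q}(l) ≽_q x ≺_q ω^{≽_q}(r)`, empty factors omitted. -/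
noncomputable def mtermQ (q : 𝕂) (x : V 𝕂) : List (V 𝕂) → List (V 𝕂) → V 𝕂
  | [], [] => x
  | [], r => precQ 𝕂 q x (omSucccQ 𝕂 q r)
  | l, [] => succcQ 𝕂 q (omPrecQ 𝕂 q l) x
  | l, r => precQ 𝕂 q (succcQ 𝕂 q (omPrecQ 𝕂 q l) x) (omSucccQ 𝕂 q r)

/-- the brace operation `M^{ST(q)}_{1k}`. -/
noncomputable def braceMQ (q : 𝕂) (x : V 𝕂) (ys : List (V 𝕂)) : V 𝕂 :=
  ∑ j ∈ Finset.range (ys.length + 1),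
    ((-1 : 𝕂) ^ (ys.length - j)) • mtermQ 𝕂 q x (ys.take j) (ys.drop j)

/-- the shuffle product of two basis elements. -/
noncomputable def shufSingle (x y : List ℕ) : V 𝕂 :=
  ∑ᶠ f ∈ {f : List ℕ | IsShuffle [rk x, rk y] f},
    Finsupp.single (wcomp f (cat x y)) (1 : 𝕂)

/-- the shuffle product `*` on `𝕂[ST]`, as a bilinear map. -/
noncomputable def shufL : V 𝕂 →ₗ[𝕂] V 𝕂 →ₗ[𝕂] V 𝕂 :=
  Finsupp.lsum 𝕂 fun x => LinearMap.toSpanSingleton 𝕂 _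
    (Finsupp.lsum 𝕂 fun y => LinearMap.toSpanSingleton 𝕂 _ (shufSingle 𝕂 x y))

/-- the augmented space `𝕂·1 ⊕ 𝕂[ST]`. -/
abbrev Vp := 𝕂 × V 𝕂

/-- inclusion `𝕂[ST] ↪ 𝕂·1 ⊕ 𝕂[ST]`. -/
noncomputable def inclV : V 𝕂 →ₗ[𝕂] Vp 𝕂 := LinearMap.inr 𝕂 𝕂 (V 𝕂)

/-- the unit `1`. -/
noncomputable def oneVp : Vp 𝕂 := (1, 0)

/-- the unital extension of the shuffle product to `𝕂·1 ⊕ 𝕂[ST]`, as a bilinear map: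
    `(a + x)(b + y) = ab + (a y + b x + x * y)`.  In particular `1 * u = u = u * 1`. -/
noncomputable def mulVp : Vp 𝕂 →ₗ[𝕂] Vp 𝕂 →ₗ[𝕂] Vp 𝕂 :=
  LinearMap.mk₂ 𝕂 (fun u v => (u.1 * v.1, u.1 • v.2 + v.1 • u.2 + shufL 𝕂 u.2 v.2))
    (fun u u' v => by
      refine Prod.ext ?_ ?_ <;>
        simp [add_mul, add_smul, smul_add, map_add, LinearMap.add_apply] <;> abel)
    (fun c u v => by
      refine Prod.ext ?_ ?_ <;>
        simp [mul_assoc, mul_smul, smul_add, smul_comm c v.1] <;> abel)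
    (fun u v v' => by
      refine Prod.ext ?_ ?_ <;>
        simp [mul_add, add_smul, smul_add, map_add, LinearMap.add_apply] <;> abel)
    (fun c u v => by
      refine Prod.ext ?_ ?_ <;>
        simp [mul_left_comm, mul_smul, smul_add, smul_comm c u.1] <;> abel)

/-- the extension `Δ⁺` of `Δ` to `𝕂·1 ⊕ 𝕂[ST]`, with `Δ⁺(1) = 1 ⊗ 1` and
    `Δ⁺(x) = x ⊗ 1 + 1 ⊗ x + Δ(x)` for `x ∈ 𝕂[ST]`. -/
noncomputable def DeltaP : Vp 𝕂 →ₗ[𝕂] TensorProduct 𝕂 (Vp 𝕂) (Vp 𝕂) :=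
  (LinearMap.toSpanSingleton 𝕂 _ (oneVp 𝕂 ⊗ₜ[𝕂] oneVp 𝕂)).comp (LinearMap.fst 𝕂 𝕂 (V 𝕂))
    + (((TensorProduct.mk 𝕂 (Vp 𝕂) (Vp 𝕂)).flip (oneVp 𝕂)).comp (inclV 𝕂)).comp
        (LinearMap.snd 𝕂 𝕂 (V 𝕂))
    + ((TensorProduct.mk 𝕂 (Vp 𝕂) (Vp 𝕂) (oneVp 𝕂)).comp (inclV 𝕂)).comp
        (LinearMap.snd 𝕂 𝕂 (V 𝕂))
    + ((TensorProduct.map (inclV 𝕂) (inclV 𝕂)).comp (Delta 𝕂)).comp (LinearMap.snd 𝕂 𝕂 (V 𝕂))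

/-- componentwise product on the tensor square: `(a⊗b)·(c⊗d) = (a·c)⊗(b·d)`. -/
noncomputable def mulTsq :
    TensorProduct 𝕂 (Vp 𝕂) (Vp 𝕂) →ₗ[𝕂]
      TensorProduct 𝕂 (Vp 𝕂) (Vp 𝕂) →ₗ[𝕂] TensorProduct 𝕂 (Vp 𝕂) (Vp 𝕂) :=
  TensorProduct.lift
    (((TensorProduct.mapBilinear (σ₁₂ := RingHom.id 𝕂) (M := Vp 𝕂) (N := Vp 𝕂)
        (M₂ := Vp 𝕂) (N₂ := Vp 𝕂)).comp (mulVp 𝕂)).compl₂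
      (mulVp 𝕂))

/-- concatenation on the right with a fixed word, linearized: `x ↦ x × y`. -/
noncomputable def catR (y : List ℕ) : V 𝕂 →ₗ[𝕂] V 𝕂 :=
  Finsupp.lsum 𝕂 fun x => LinearMap.toSpanSingleton 𝕂 _ (Finsupp.single (cat x y) (1 : 𝕂))

/-- concatenation on the left with a fixed word, linearized: `y ↦ x × y`. -/
noncomputable def catL (x : List ℕ) : V 𝕂 →ₗ[𝕂] V 𝕂 :=
  Finsupp.lsum 𝕂 fun y => LinearMap.toSpanSingleton 𝕂 _ (Finsupp.single (cat x y) (1 : 𝕂))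

/-- `Sh^•(r₁,…,r_p)`: surjections onto `{1,…,R-p+1}` (where `R = r₁+…+r_p`), strictly
    increasing on each block, attaining the maximal value exactly at the block ends, and whose
    corestriction to `{1,…,R-p}` is a `(r₁-1,…,r_p-1)`-shuffle. -/
def ShBull (rs : List ℕ) (f : List ℕ) : Prop :=
  memST f rs.sum (rs.sum - rs.length + 1) ∧ blockIncr rs f ∧
    (∀ i, 1 ≤ i → i ≤ rs.sum →
      (ent f i = rs.sum - rs.length + 1 ↔ ∃ k, k < rs.length ∧ i = (rs.take (k + 1)).sum)) ∧
    IsShuffle (rs.map (· - 1)) (corestrict f (Finset.Icc 1 (rs.sum - rs.length)))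

section Statement10Aux

lemma rk_cons (a : ℕ) (t : List ℕ) : rk (a :: t) = max a (rk t) := rfl

lemma mem_le_rk {l : List ℕ} {v : ℕ} (h : v ∈ l) : v ≤ rk l := by
  induction l with
  | nil => simp at h
  | cons a t ih =>
    rcases List.mem_cons.1 h with h | h
    · rw [h, rk_cons]; exact le_max_left _ _
    · rw [rk_cons]; exact (ih h).trans (le_max_right _ _)

lemma rk_le {l : List ℕ} {m : ℕ} (h : ∀ v ∈ l, v ≤ m) : rk l ≤ m := by
  induction l with
  | nil => exact Nat.zero_le m
  | cons a t ih =>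
    rw [rk_cons]
    exact max_le (h a (List.mem_cons_self)) (ih fun v hv => h v (List.mem_cons_of_mem _ hv))

lemma rk_eq_of {l : List ℕ} {m : ℕ} (hm : m ∈ l) (h : ∀ v ∈ l, v ≤ m) : rk l = m :=
  le_antisymm (rk_le h) (mem_le_rk hm)

lemma rk_perm {l₁ l₂ : List ℕ} (h : l₁.Perm l₂) : rk l₁ = rk l₂ :=
  le_antisymm (rk_le fun v hv => mem_le_rk (h.mem_iff.1 hv))
    (rk_le fun v hv => mem_le_rk (h.mem_iff.2 hv))

/-- recursive computation of the positions of the value `r`. -/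
def mpRec : List ℕ → ℕ → List ℕ
  | [], _ => []
  | a :: t, r => if a = r then 0 :: (mpRec t r).map (· + 1) else (mpRec t r).map (· + 1)

@[simp] lemma mpRec_nil (r : ℕ) : mpRec [] r = [] := rfl

lemma mpRec_cons_self (t : List ℕ) (r : ℕ) :
    mpRec (r :: t) r = 0 :: (mpRec t r).map (· + 1) := by simp [mpRec]

lemma mpRec_cons_ne {a r : ℕ} (t : List ℕ) (h : a ≠ r) :
    mpRec (a :: t) r = (mpRec t r).map (· + 1) := by simp [mpRec, h]

lemma maxPos_eq (z : List ℕ) (r : ℕ) :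
    (List.range z.length).filter (fun i => z.getD i 0 = r) = mpRec z r := by
  induction z with
  | nil => rfl
  | cons a t ih =>
    rw [List.length_cons, List.range_succ_eq_map, List.filter_cons]
    have hmap : List.filter (fun i => decide ((a :: t).getD i 0 = r))
        (List.map Nat.succ (List.range t.length)) = (mpRec t r).map (· + 1) := by
      rw [List.filter_map]
      have h1 : ((fun i => decide ((a :: t).getD i 0 = r)) ∘ Nat.succ)
          = fun i => decide (t.getD i 0 = r) := by
        funext i
        simp [Function.comp, Nat.succ_eq_add_one, List.getD_cons_succ]
      rw [h1, ih]
    by_cases har : a = r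
    · rw [if_pos (by simp [har]), hmap, har, mpRec_cons_self]
    · rw [if_neg (by simp [har]), hmap, mpRec_cons_ne _ har]

lemma maxPos_eq' (z : List ℕ) : maxPos z = mpRec z (rk z) := by
  unfold maxPos; exact maxPos_eq z (rk z)

lemma mpRec_ne_nil {z : List ℕ} {r : ℕ} (h : r ∈ z) : mpRec z r ≠ [] := by
  induction z with
  | nil => simp at h
  | cons a t ih =>
    by_cases har : a = r
    · subst har; simp [mpRec_cons_self]
    · rw [mpRec_cons_ne _ har]
      have hrt : r ∈ t := by
        rcases List.mem_cons.1 h with h' | h'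
        · exact absurd h'.symm har
        · exact h'
      simpa using ih hrt

lemma mpRec_append {P F : List ℕ} {r : ℕ} (h : ∀ v ∈ P, v ≠ r) :
    mpRec (P ++ F) r = (mpRec F r).map (· + P.length) := by
  induction P with
  | nil => simp
  | cons a t ih =>
    rw [List.cons_append, mpRec_cons_ne _ (h a (List.mem_cons_self)),
      ih fun v hv => h v (List.mem_cons_of_mem _ hv), List.map_map]
    apply List.map_congr_left
    intro v _
    simp [Function.comp]; omega

/-- the `𝕄`-word, before reversal, computed from the position list and length. -/
def Mw (mp : List ℕ) (n : ℕ) : List ℕ :=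
  List.zipWith (fun a b => b - a - 1) mp (mp.drop 1) ++ [n - mp.getLastD 0 - 1]

lemma Mword_eq (z : List ℕ) : Mword z = (Mw (mpRec z (rk z)) z.length).reverse := by
  unfold Mword Mw
  rw [maxPos_eq']

lemma zipWith_shift (c : ℕ) : ∀ (l l' : List ℕ),
    List.zipWith (fun a b => b - a - 1) (l.map (· + c)) (l'.map (· + c)) =
      List.zipWith (fun a b => b - a - 1) l l'
  | [], l' => by simp
  | a :: l, [] => by simp
  | a :: l, b :: l' => by
    simp only [List.map_cons, List.zipWith_cons_cons, zipWith_shift c l l']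
    congr 1
    omega

lemma getLastD_map_add (c : ℕ) : ∀ {m : List ℕ}, m ≠ [] →
    (m.map (· + c)).getLastD 0 = m.getLastD 0 + c
  | [], hm => absurd rfl hm
  | [a], _ => rfl
  | a :: b :: t, _ => by
    have := getLastD_map_add c (m := b :: t) (by simp)
    simpa [List.getLastD_cons] using this

lemma headD_map_add {m : List ℕ} (hm : m ≠ []) (c : ℕ) :
    (m.map (· + c)).headD 0 = m.headD 0 + c := by
  cases m with
  | nil => exact absurd rfl hm
  | cons a t => rfl

lemma Mw_shift (c n : ℕ) {m : List ℕ} (hm : m ≠ []) : Mw (m.map (· + c)) (n + c) = Mw m n := by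
  unfold Mw
  have hd : (m.map (· + c)).drop 1 = (m.drop 1).map (· + c) := by
    rw [List.map_drop]
  rw [hd, zipWith_shift, getLastD_map_add c hm]
  congr 1
  congr 1
  omega

lemma Mw_nil (n : ℕ) : Mw [] n = [n - 1] := by simp [Mw]

lemma Mw_cons0 {m : List ℕ} (hm : m ≠ []) (n : ℕ) :
    Mw (0 :: m.map (· + 1)) (n + 1) = m.headD 0 :: Mw m n := by
  obtain ⟨j, t, rfl⟩ : ∃ j t, m = j :: t := by
    cases m with
    | nil => exact absurd rfl hm
    | cons j t => exact ⟨j, t, rfl⟩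
  have hz := zipWith_shift 1 (j :: t) t
  have hg : ((j :: t).map (· + 1)).getLastD 0 = (j :: t).getLastD 0 + 1 :=
    getLastD_map_add 1 (by simp)
  unfold Mw
  simp only [List.map_cons] at hz hg ⊢
  simp only [List.drop_succ_cons, List.drop_zero, List.zipWith_cons_cons, List.headD_cons]
  have h0 : (0 :: (j + 1) :: List.map (fun x => x + 1) t).getLastD 0
      = ((j + 1) :: List.map (fun x => x + 1) t).getLastD 0 := List.getLastD_cons
  rw [hz, h0, hg]
  have e1 : j + 1 - 0 - 1 = j := by omega
  have e2 : n + 1 - ((j :: t).getLastD 0 + 1) - 1 = n - (j :: t).getLastD 0 - 1 := by omega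
  rw [e1, e2]
  rfl

lemma key_compare (p : ℕ → Bool) (r : ℕ) (hp : p r = true) (z : List ℕ) :
    (mpRec (z.filter p) r).length = (mpRec z r).length ∧
      (mpRec (z.filter p) r).headD 0 ≤ (mpRec z r).headD 0 ∧
      List.Forall₂ (· ≤ ·) (Mw (mpRec (z.filter p) r) (z.filter p).length)
        (Mw (mpRec z r) z.length) := by
  induction z with
  | nil =>
    refine ⟨rfl, le_rfl, ?_⟩
    simp only [List.filter_nil, mpRec_nil, Mw_nil, List.length_nil]
    exact List.Forall₂.cons le_rfl List.Forall₂.nil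
  | cons a t ih =>
    obtain ⟨ih1, ih2, ih3⟩ := ih
    have hfl := List.length_filter_le p t
    have emptyF : mpRec t r = [] → mpRec (t.filter p) r = [] := fun h =>
      List.length_eq_zero_iff.mp (by rw [ih1, h, List.length_nil])
    have nemptyF : mpRec t r ≠ [] → mpRec (t.filter p) r ≠ [] := by
      intro h hF
      exact h (List.length_eq_zero_iff.mp (by rw [← ih1, hF, List.length_nil]))
    by_cases har : a = r
    · subst har
      rw [List.filter_cons_of_pos hp, mpRec_cons_self, mpRec_cons_self]
      by_cases hm : mpRec t a = []
      · have hmF := emptyF hm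
        refine ⟨by simp [hm, hmF], le_rfl, ?_⟩
        rw [hm, hmF, List.map_nil, List.length_cons, List.length_cons]
        have e1 : ∀ k : ℕ, Mw [0] (k + 1) = [k] := fun k => by simp [Mw]
        rw [e1, e1]
        exact List.Forall₂.cons hfl List.Forall₂.nil
      · have hmF := nemptyF hm
        refine ⟨by simp [ih1], le_rfl, ?_⟩
        rw [List.length_cons, List.length_cons, Mw_cons0 hmF, Mw_cons0 hm]
        exact List.Forall₂.cons ih2 ih3
    · by_cases hpa : p a = true
      · rw [List.filter_cons_of_pos hpa, mpRec_cons_ne _ har, mpRec_cons_ne _ har]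
        refine ⟨by simp [ih1], ?_, ?_⟩
        · by_cases hm : mpRec t r = []
          · simp [hm, emptyF hm]
          · rw [headD_map_add hm, headD_map_add (nemptyF hm)]
            omega
        · by_cases hm : mpRec t r = []
          · rw [hm, emptyF hm, List.map_nil, List.length_cons, List.length_cons, Mw_nil, Mw_nil]
            have e1 : ∀ k : ℕ, k + 1 - 1 = k := fun k => by omega
            rw [e1, e1]
            exact List.Forall₂.cons hfl List.Forall₂.nil
          · rw [List.length_cons, List.length_cons, Mw_shift 1 _ (nemptyF hm), Mw_shift 1 _ hm]
            exact ih3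
      · rw [List.filter_cons_of_neg (by simpa using hpa), mpRec_cons_ne _ har]
        refine ⟨by simp [ih1], ?_, ?_⟩
        · by_cases hm : mpRec t r = []
          · simp [hm, emptyF hm]
          · rw [headD_map_add hm]
            omega
        · by_cases hm : mpRec t r = []
          · rw [hm, emptyF hm, List.map_nil, List.length_cons, Mw_nil, Mw_nil]
            refine List.Forall₂.cons (by omega) List.Forall₂.nil
          · rw [List.length_cons, Mw_shift 1 _ hm]
            exact ih3

lemma forall₂_le_eq_or_lex : ∀ {a b : List ℕ}, List.Forall₂ (· ≤ ·) a b →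
    a = b ∨ List.Lex (· < ·) a b := by
  intro a b h
  induction h with
  | nil => exact Or.inl rfl
  | @cons x y l l' hxy _ ih =>
    rcases eq_or_lt_of_le hxy with h' | h'
    · subst h'
      rcases ih with h'' | h''
      · exact Or.inl (by rw [h''])
      · exact Or.inr (List.Lex.cons h'')
    · exact Or.inr (List.Lex.rel h')

lemma mem_filter_Icc {x : List ℕ} (hx : IsST x) {a b u : ℕ} (hbr : b ≤ rk x) :
    (u ∈ x.filter (· ∈ Finset.Icc (a + 1) b)) ↔ a + 1 ≤ u ∧ u ≤ b := by
  simp only [List.mem_filter, Finset.mem_Icc, decide_eq_true_eq]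
  constructor
  · rintro ⟨-, h⟩; exact h
  · rintro ⟨h1, h2⟩
    exact ⟨(hx.2 u).2 ⟨by omega, le_trans h2 hbr⟩, h1, h2⟩

lemma corestrict_Icc {x : List ℕ} (hx : IsST x) {a b : ℕ} (hab : a < b) (hbr : b ≤ rk x) :
    corestrict x (Finset.Icc (a + 1) b) = (x.filter (· ∈ Finset.Icc (a + 1) b)).map (· - a) := by
  unfold corestrict stdList
  apply List.map_congr_left
  intro v hv
  obtain ⟨hv1, hv2⟩ := (mem_filter_Icc hx hbr).1 hv
  set w := x.filter (· ∈ Finset.Icc (a + 1) b) with hw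
  have hnd : (w.dedup.filter (· ≤ v)).Nodup := (List.nodup_dedup w).filter _
  have htf : (w.dedup.filter (· ≤ v)).toFinset = Finset.Icc (a + 1) v := by
    ext u
    simp only [List.mem_toFinset, List.mem_filter, List.mem_dedup, decide_eq_true_eq,
      Finset.mem_Icc]
    rw [hw, mem_filter_Icc hx hbr]
    omega
  have hlen := List.toFinset_card_of_nodup hnd
  rw [htf, Nat.card_Icc] at hlen
  omega

lemma mem_piece_iff {x : List ℕ} (hx : IsST x) {a b u : ℕ} (hbr : b ≤ rk x) :
    (u ∈ (x.filter (· ∈ Finset.Icc (a + 1) b)).map (· - a)) ↔ 1 ≤ u ∧ u ≤ b - a := by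
  simp only [List.mem_map]
  constructor
  · rintro ⟨v, hv, rfl⟩
    obtain ⟨h1, h2⟩ := (mem_filter_Icc hx hbr).1 hv
    omega
  · rintro ⟨h1, h2⟩
    exact ⟨u + a, (mem_filter_Icc hx hbr).2 ⟨by omega, by omega⟩, by omega⟩

lemma rk_piece {x : List ℕ} (hx : IsST x) {a b : ℕ} (hab : a < b) (hbr : b ≤ rk x) :
    rk ((x.filter (· ∈ Finset.Icc (a + 1) b)).map (· - a)) = b - a := by
  refine rk_eq_of ((mem_piece_iff hx hbr).2 ⟨by omega, le_rfl⟩) fun v hv => ?_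
  exact ((mem_piece_iff hx hbr).1 hv).2

/-- the stable rebucketing of `x` into value blocks. -/
def blockify (x : List ℕ) : ℕ → List ℕ → ℕ → List ℕ
  | a, [], r => x.filter (· ∈ Finset.Icc (a + 1) r)
  | a, l :: t, r => x.filter (· ∈ Finset.Icc (a + 1) l) ++ blockify x l t r

lemma blockify_lb {x : List ℕ} : ∀ {ls : List ℕ} {a r v : ℕ},
    List.Chain' (· < ·) (a :: ls) → v ∈ blockify x a ls r → a < v := by
  intro ls
  induction ls with
  | nil =>
    intro a r v _ hv
    have := (List.mem_filter.1 hv).2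
    simp only [Finset.mem_Icc, decide_eq_true_eq] at this
    omega
  | cons l t ih =>
    intro a r v hch hv
    rcases List.mem_append.1 hv with hv | hv
    · have := (List.mem_filter.1 hv).2
      simp only [Finset.mem_Icc, decide_eq_true_eq] at this
      omega
    · have hal : a < l := (List.isChain_cons_cons.1 hch).1
      have := ih (List.isChain_cons_cons.1 hch).2 hv
      omega

lemma blockify_ub {x : List ℕ} {r : ℕ} : ∀ {ls : List ℕ} {a v : ℕ},
    (∀ l ∈ ls, l ≤ r) → v ∈ blockify x a ls r → v ≤ r := by
  intro ls
  induction ls with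
  | nil =>
    intro a v _ hv
    have := (List.mem_filter.1 hv).2
    simp only [Finset.mem_Icc, decide_eq_true_eq] at this
    omega
  | cons l t ih =>
    intro a v hub hv
    rcases List.mem_append.1 hv with hv | hv
    · have := (List.mem_filter.1 hv).2
      simp only [Finset.mem_Icc, decide_eq_true_eq] at this
      have := hub l (List.mem_cons_self)
      omega
    · exact ih (fun u hu => hub u (List.mem_cons_of_mem _ hu)) hv

lemma catAll_pieces {x : List ℕ} (hx : IsST x) : ∀ (ls : List ℕ) (a : ℕ),
    List.Chain' (· < ·) (a :: ls) → (∀ l ∈ ls, l < rk x) → a < rk x →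
    catAll (((a :: ls).zip (ls ++ [rk x])).map fun pq =>
        corestrict x (Finset.Icc (pq.1 + 1) pq.2)) =
      (blockify x a ls (rk x)).map (· - a) := by
  intro ls
  induction ls with
  | nil =>
    intro a _ _ har
    show cat (corestrict x (Finset.Icc (a + 1) (rk x))) (catAll []) = _
    rw [corestrict_Icc hx har le_rfl]
    show _ ++ List.map _ [] = _
    rw [List.map_nil, List.append_nil]
    rfl
  | cons l t ih =>
    intro a hch hub har
    have hal : a < l := (List.isChain_cons_cons.1 hch).1
    have hlr : l < rk x := hub l (List.mem_cons_self)
    show cat (corestrict x (Finset.Icc (a + 1) l))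
        (catAll (((l :: t).zip (t ++ [rk x])).map fun pq =>
          corestrict x (Finset.Icc (pq.1 + 1) pq.2))) = _
    rw [ih l (List.isChain_cons_cons.1 hch).2 (fun u hu => hub u (List.mem_cons_of_mem _ hu)) hlr]
    rw [corestrict_Icc hx hal hlr.le]
    unfold cat
    rw [rk_piece hx hal hlr.le]
    show _ = (blockify x a (l :: t) (rk x)).map (· - a)
    rw [show blockify x a (l :: t) (rk x)
        = x.filter (· ∈ Finset.Icc (a + 1) l) ++ blockify x l t (rk x) from rfl]
    rw [List.map_append, List.map_map]
    congr 1
    apply List.map_congr_left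
    intro v hv
    have hlv : l < v := blockify_lb (List.isChain_cons_cons.1 hch).2 hv
    simp only [Function.comp]
    omega

lemma blockify_perm {x : List ℕ} : ∀ (ls : List ℕ) (a : ℕ),
    List.Chain' (· < ·) (a :: ls) → (∀ l ∈ ls, l ≤ rk x) →
    (blockify x a ls (rk x)).Perm (x.filter (· ∈ Finset.Icc (a + 1) (rk x))) := by
  intro ls
  induction ls with
  | nil => intro a _ _; exact List.Perm.refl _
  | cons l t ih =>
    intro a hch hub
    have hal : a < l := (List.isChain_cons_cons.1 hch).1
    have hlr : l ≤ rk x := hub l (List.mem_cons_self)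
    have hperm := List.filter_append_perm (fun v => decide (v ≤ l))
      (x.filter (· ∈ Finset.Icc (a + 1) (rk x)))
    have h1 : (x.filter (· ∈ Finset.Icc (a + 1) (rk x))).filter (fun v => decide (v ≤ l))
        = x.filter (· ∈ Finset.Icc (a + 1) l) := by
      rw [List.filter_filter]
      apply List.filter_congr
      intro v _
      rw [Bool.eq_iff_iff]
      simp only [Bool.and_eq_true, decide_eq_true_eq, Finset.mem_Icc]
      omega
    have h2 : (x.filter (· ∈ Finset.Icc (a + 1) (rk x))).filter (fun v => !decide (v ≤ l))
        = x.filter (· ∈ Finset.Icc (l + 1) (rk x)) := by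
      rw [List.filter_filter]
      apply List.filter_congr
      intro v _
      rw [Bool.eq_iff_iff]
      simp only [Bool.and_eq_true, Bool.not_eq_true', decide_eq_false_iff_not,
        decide_eq_true_eq, Finset.mem_Icc]
      omega
    rw [h1, h2] at hperm
    show (x.filter (· ∈ Finset.Icc (a + 1) l) ++ blockify x l t (rk x)).Perm _
    exact (List.Perm.append_left _
      (ih l (List.isChain_cons_cons.1 hch).2 fun u hu => hub u (List.mem_cons_of_mem _ hu))).trans
      hperm

lemma blockify_append {x : List ℕ} {r : ℕ} : ∀ (ls : List ℕ) (a L : ℕ),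
    blockify x a (ls ++ [L]) r = blockify x a ls L ++ x.filter (· ∈ Finset.Icc (L + 1) r) := by
  intro ls
  induction ls with
  | nil => intro a L; rfl
  | cons l t ih =>
    intro a L
    show x.filter (· ∈ Finset.Icc (a + 1) l) ++ blockify x l (t ++ [L]) r = _
    rw [ih l L, ← List.append_assoc]
    rfl

end Statement10Aux

/-- for `x ∈ ST_n^r` and `0 < l₁ < … < l_p < r` (`p ≥ 1`), the element
`x^{(l₁,…,l_p)}` lies in `ST_n^r`, has the same `λ`, and `𝕄(x^{(l₁,…,l_p)}) ≤ 𝕄(x)`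
for the lexicographic order. -/
theorem statement_10 (x : List ℕ) (n r : ℕ) (hx : memST x n r) (ls : List ℕ) (hne : ls ≠ [])
    (hchain : ls.Chain' (· < ·)) (hbd : ∀ l ∈ ls, 0 < l ∧ l < r) :
    memST (xfam x ls) n r ∧ lam (xfam x ls) = lam x ∧
      (Mword (xfam x ls) = Mword x ∨ List.Lex (· < ·) (Mword (xfam x ls)) (Mword x)) := by
  obtain ⟨hxST, hlen, hrk⟩ := hx
  subst hlen
  subst hrk
  have hxne : x ≠ [] := hxST.1
  have hLmem : ls.getLast hne ∈ ls := List.getLast_mem hne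
  have hL1 : 0 < ls.getLast hne := (hbd _ hLmem).1
  have hLr : ls.getLast hne < rk x := (hbd _ hLmem).2
  have hr1 : 1 ≤ rk x := by omega
  have hrx : rk x ∈ x := (hxST.2 _).2 ⟨hr1, le_rfl⟩
  have hch0 : List.Chain' (· < ·) (0 :: ls) := by
    cases ls with
    | nil => exact absurd rfl hne
    | cons l0 ls' => exact List.isChain_cons_cons.2 ⟨(hbd l0 (List.mem_cons_self)).1, hchain⟩
  -- `xfam x ls` is the stable rebucketing of `x` into value blocks
  have hxf : xfam x ls = blockify x 0 ls (rk x) := by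
    have h := catAll_pieces hxST ls 0 hch0 (fun l hl => (hbd l hl).2) (by omega)
    unfold xfam pieces
    rw [h]
    simp
  -- it is a permutation of `x`
  have hyperm : (blockify x 0 ls (rk x)).Perm x := by
    have h := blockify_perm ls 0 hch0 (fun l hl => (hbd l hl).2.le)
    have hfx : x.filter (· ∈ Finset.Icc (0 + 1) (rk x)) = x := by
      refine List.filter_eq_self.2 fun v hv => ?_
      simp only [Finset.mem_Icc, decide_eq_true_eq]
      have := (hxST.2 v).1 hv
      omega
    rw [hfx] at h
    exact h
  have hrky : rk (blockify x 0 ls (rk x)) = rk x := rk_perm hyperm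
  have hleny : (blockify x 0 ls (rk x)).length = x.length := hyperm.length_eq
  -- splitting off the last block
  have hsplit : blockify x 0 ls (rk x) = blockify x 0 ls.dropLast (ls.getLast hne) ++
      x.filter (· ∈ Finset.Icc (ls.getLast hne + 1) (rk x)) := by
    conv_lhs => rw [← List.dropLast_append_getLast hne]
    exact blockify_append ls.dropLast 0 (ls.getLast hne)
  have hpw : List.Pairwise (· < ·) ls := List.isChain_iff_pairwise.mp hchain
  have hpw2 : List.Pairwise (· < ·) (ls.dropLast ++ [ls.getLast hne]) := by
    rw [List.dropLast_append_getLast hne]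
    exact hpw
  have hdl : ∀ l ∈ ls.dropLast, l ≤ ls.getLast hne := by
    intro l hl
    exact ((List.pairwise_append.1 hpw2).2.2 l hl (ls.getLast hne) (List.mem_singleton_self _)).le
  have hPne : ∀ v ∈ blockify x 0 ls.dropLast (ls.getLast hne), v ≠ rk x := by
    intro v hv
    have := blockify_ub hdl hv
    omega
  -- the key comparison
  have hpkey : (fun v => decide (v ∈ Finset.Icc (ls.getLast hne + 1) (rk x))) (rk x) = true := by
    simp only [Finset.mem_Icc, decide_eq_true_eq]
    omega
  obtain ⟨k1, k2, k3⟩ := key_compare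
    (fun v => decide (v ∈ Finset.Icc (ls.getLast hne + 1) (rk x))) (rk x) hpkey x
  have hrxF : rk x ∈ x.filter (· ∈ Finset.Icc (ls.getLast hne + 1) (rk x)) :=
    List.mem_filter.2 ⟨hrx, by simp only [Finset.mem_Icc, decide_eq_true_eq]; omega⟩
  have hFne : mpRec (x.filter (· ∈ Finset.Icc (ls.getLast hne + 1) (rk x))) (rk x) ≠ [] :=
    mpRec_ne_nil hrxF
  refine ⟨⟨⟨?_, ?_⟩, ?_, ?_⟩, ?_, ?_⟩
  · -- xfam x ls ≠ []
    rw [hxf]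
    intro h
    rw [h, List.length_nil] at hleny
    exact hxne (List.length_eq_zero_iff.mp hleny.symm)
  · -- membership characterization
    intro k
    rw [hxf, hrky, hyperm.mem_iff]
    exact hxST.2 k
  · rw [hxf]; exact hleny
  · rw [hxf]; exact hrky
  · -- λ is preserved
    unfold lam
    rw [hxf, maxPos_eq', maxPos_eq', hrky, hsplit, mpRec_append hPne, List.length_map]
    exact k1
  · -- 𝕄 decreases lexicographically
    have hMy : Mword (xfam x ls) =
        (Mw (mpRec (x.filter (· ∈ Finset.Icc (ls.getLast hne + 1) (rk x))) (rk x))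
          (x.filter (· ∈ Finset.Icc (ls.getLast hne + 1) (rk x))).length).reverse := by
      rw [hxf, Mword_eq, hrky, hsplit, mpRec_append hPne, List.length_append,
        Nat.add_comm (blockify x 0 ls.dropLast (ls.getLast hne)).length _,
        Mw_shift _ _ hFne]
    rw [hMy, Mword_eq x]
    exact forall₂_le_eq_or_lex (List.rel_reverse k3)

end SurjPerm
end

section
/- Let x ∈ ST_n^r be indecomposable, let y ∈ ST_m^s, and let f ∈ Sh^≺(r,s). Then f∘(x×y) is indecomposable. -/
open scoped TensorProduct

namespace SurjPerm

variable (𝕂 : Type) [Field 𝕂]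

lemma le_rk {l : List ℕ} {k : ℕ} (h : k ∈ l) : k ≤ rk l := by
  induction l with
  | nil => simp at h
  | cons a t ih =>
    rcases List.mem_cons.1 h with h | h
    · simp [rk_cons, h]
    · exact le_trans (ih h) (le_max_right _ _)

lemma rk_le_of {l : List ℕ} {R : ℕ} (h : ∀ k ∈ l, k ≤ R) : rk l ≤ R := by
  induction l with
  | nil => simp [rk]
  | cons a t ih =>
    simp only [rk_cons, max_le_iff]
    exact ⟨h a (by simp), ih fun k hk => h k (by simp [hk])⟩

lemma rk_mem {l : List ℕ} (h : l ≠ []) : rk l ∈ l := by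
  induction l with
  | nil => simp at h
  | cons a t ih =>
    rcases eq_or_ne t [] with rfl | ht
    · simp [rk_cons, rk]
    · rcases max_cases a (rk t) with ⟨h1, _⟩ | ⟨h1, _⟩ <;> rw [rk_cons, h1]
      · exact List.mem_cons_self
      · exact List.mem_cons_of_mem _ (ih ht)

lemma ent_eq_getElem {l : List ℕ} {i : ℕ} (h1 : 1 ≤ i) (h2 : i ≤ l.length) :
    ent l i = l[i-1]'(by omega) := by
  simp [ent, List.getD_eq_getElem?_getD, List.getElem?_eq_getElem (by omega : i - 1 < l.length)]

lemma ent_mem {l : List ℕ} {i : ℕ} (h1 : 1 ≤ i) (h2 : i ≤ l.length) : ent l i ∈ l := by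
  rw [ent_eq_getElem h1 h2]; exact List.getElem_mem _

lemma exists_ent_of_mem {l : List ℕ} {k : ℕ} (h : k ∈ l) :
    ∃ i, 1 ≤ i ∧ i ≤ l.length ∧ ent l i = k := by
  obtain ⟨j, hj, rfl⟩ := List.getElem_of_mem h
  exact ⟨j + 1, by omega, by omega, by rw [ent_eq_getElem (by omega) (by omega)]; simp⟩

lemma rk_eq_of_s18 {l : List ℕ} {R : ℕ}
    (h1 : ∀ i, 1 ≤ i → i ≤ l.length → ent l i ≤ R)
    (h2 : ∃ i, 1 ≤ i ∧ i ≤ l.length ∧ ent l i = R) : rk l = R := by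
  obtain ⟨i, hi1, hi2, hi3⟩ := h2
  refine le_antisymm (rk_le_of fun k hk => ?_) (hi3 ▸ le_rk (ent_mem hi1 hi2))
  obtain ⟨j, hj1, hj2, rfl⟩ := exists_ent_of_mem hk
  exact h1 j hj1 hj2

lemma ent_map {g : ℕ → ℕ} {l : List ℕ} {i : ℕ} (h1 : 1 ≤ i) (h2 : i ≤ l.length) :
    ent (l.map g) i = g (ent l i) := by
  rw [ent_eq_getElem h1 (by simpa using h2), ent_eq_getElem h1 h2, List.getElem_map]

lemma ent_append_left {l₁ l₂ : List ℕ} {i : ℕ} (h1 : 1 ≤ i) (h2 : i ≤ l₁.length) :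
    ent (l₁ ++ l₂) i = ent l₁ i := by
  rw [ent_eq_getElem h1 (by simp; omega), ent_eq_getElem h1 h2,
    List.getElem_append_left (by omega)]

lemma ent_append_right {l₁ l₂ : List ℕ} {i : ℕ} (h1 : l₁.length < i)
    (h2 : i ≤ l₁.length + l₂.length) :
    ent (l₁ ++ l₂) i = ent l₂ (i - l₁.length) := by
  rw [ent_eq_getElem (by omega) (by simp; omega), ent_eq_getElem (by omega) (by omega),
    List.getElem_append_right (by omega)]
  congr 1; omega


lemma cat_length (x y : List ℕ) : (cat x y).length = x.length + y.length := by
  simp [cat]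

lemma ent_cat_left {x y : List ℕ} {i : ℕ} (h1 : 1 ≤ i) (h2 : i ≤ x.length) :
    ent (cat x y) i = ent x i := ent_append_left h1 h2

lemma ent_cat_right {x y : List ℕ} {i : ℕ} (h1 : x.length < i)
    (h2 : i ≤ x.length + y.length) :
    ent (cat x y) i = ent y (i - x.length) + rk x := by
  rw [cat, ent_append_right (by omega) (by simp; omega),
    ent_map (by omega) (by omega)]

lemma wcomp_length (f w : List ℕ) : (wcomp f w).length = w.length := by simp [wcomp]

lemma ent_wcomp {f w : List ℕ} {i : ℕ} (h1 : 1 ≤ i) (h2 : i ≤ w.length) :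
    ent (wcomp f w) i = ent f (ent w i) := ent_map h1 h2

lemma dotW_length (a b : List ℕ) : (dotW a b).length = a.length + b.length := by
  simp [dotW]

lemma ent_dotW_left {a b : List ℕ} {i : ℕ} (h1 : 1 ≤ i) (h2 : i ≤ a.length) :
    ent (dotW a b) i = if ent a i < rk a then ent a i else rk a + rk b - 1 := by
  rw [dotW, ent_append_left h1 (by simpa using h2), ent_map h1 h2]

lemma ent_dotW_right {a b : List ℕ} {i : ℕ} (h1 : a.length < i)
    (h2 : i ≤ a.length + b.length) :
    ent (dotW a b) i =
      if ent b (i - a.length) < rk b then ent b (i - a.length) + rk a - 1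
      else rk a + rk b - 1 := by
  rw [dotW, ent_append_right (by simpa using h1) (by simp; omega)]
  rw [show (a.map fun v => if v < rk a then v else rk a + rk b - 1).length = a.length by simp]
  rw [ent_map (by omega) (by omega)]

lemma IsST.one_le_rk {l : List ℕ} (h : IsST l) : 1 ≤ rk l :=
  ((h.2 (rk l)).1 (rk_mem h.1)).1

lemma IsST.one_le_length {l : List ℕ} (h : IsST l) : 1 ≤ l.length :=
  List.length_pos_iff.2 h.1

lemma IsST.ent_bounds {l : List ℕ} (h : IsST l) {i : ℕ} (h1 : 1 ≤ i) (h2 : i ≤ l.length) :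
    1 ≤ ent l i ∧ ent l i ≤ rk l := (h.2 _).1 (ent_mem h1 h2)

lemma IsST.surj {l : List ℕ} (h : IsST l) {k : ℕ} (h1 : 1 ≤ k) (h2 : k ≤ rk l) :
    ∃ i, 1 ≤ i ∧ i ≤ l.length ∧ ent l i = k :=
  exists_ent_of_mem ((h.2 k).2 ⟨h1, h2⟩)

lemma perm_nodup {f : List ℕ} (hf : IsST f) (hlen : rk f = f.length) : f.Nodup := by
  have hsub : List.range' 1 (rk f) ⊆ f := by
    intro k hk
    rw [List.mem_range'_1] at hk
    exact (hf.2 k).2 ⟨hk.1, by omega⟩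
  have hsp : List.Subperm (List.range' 1 (rk f)) f :=
    List.subperm_of_subset (List.nodup_range' ..) hsub
  have hperm : (List.range' 1 (rk f)).Perm f :=
    hsp.perm_of_length_le (by simp [hlen])
  exact hperm.nodup (List.nodup_range' ..)

lemma ent_inj {f : List ℕ} (hnd : f.Nodup) {i j : ℕ} (hi1 : 1 ≤ i) (hi2 : i ≤ f.length)
    (hj1 : 1 ≤ j) (hj2 : j ≤ f.length) (h : ent f i = ent f j) : i = j := by
  rw [ent_eq_getElem hi1 hi2, ent_eq_getElem hj1 hj2] at h
  have := (List.Nodup.getElem_inj_iff hnd (hi := by omega) (hj := by omega)).1 h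
  omega


lemma list_ext_ent {l₁ l₂ : List ℕ} (h : l₁.length = l₂.length)
    (he : ∀ i, 1 ≤ i → i ≤ l₁.length → ent l₁ i = ent l₂ i) : l₁ = l₂ := by
  apply List.ext_getElem h
  intro i hi1 hi2
  have h3 := he (i+1) (by omega) (by omega)
  rw [ent_eq_getElem (l := l₁) (by omega) (by omega),
    ent_eq_getElem (l := l₂) (by omega) (by omega)] at h3
  simpa using h3


set_option maxHeartbeats 1600000 in
/-- if `x` is indecomposable and `f ∈ Sh^≺(r,s)`, then `f∘(x×y)` is
indecomposable. -/
theorem statement_18 (x y f : List ℕ) (n r m s : ℕ)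
    (hx : memST x n r) (hxi : Indec x) (hy : memST y m s)
    (hf : IsShuffle [r, s] f) (hfp : ent f (r + s) < ent f r) :
    Indec (wcomp f (cat x y)) := by
  obtain ⟨hxST, hxlen, hxrk⟩ := hx
  obtain ⟨hyST, hylen, hyrk⟩ := hy
  have hfST : IsST f := hf.1.1
  have hflen : f.length = r + s := by simpa using hf.1.2.1
  have hfrk : rk f = r + s := by simpa using hf.2
  have hfbi := hf.1.2.2
  have hr1 : 1 ≤ r := hxrk ▸ hxST.one_le_rk
  have hs1 : 1 ≤ s := hyrk ▸ hyST.one_le_rk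
  have hn1 : 1 ≤ n := hxlen ▸ hxST.one_le_length
  have hm' : 1 ≤ m := hylen ▸ hyST.one_le_length
  -- bounds & surjectivity of f, x, y as functions
  have hFb : ∀ i, 1 ≤ i → i ≤ r + s → 1 ≤ ent f i ∧ ent f i ≤ r + s := by
    intro i h1 h2
    have := hfST.ent_bounds h1 (by omega)
    omega
  have hxent : ∀ i, 1 ≤ i → i ≤ n → 1 ≤ ent x i ∧ ent x i ≤ r := by
    intro i h1 h2
    have := hxST.ent_bounds h1 (by omega)
    omega
  have hyent : ∀ i, 1 ≤ i → i ≤ m → 1 ≤ ent y i ∧ ent y i ≤ s := by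
    intro i h1 h2
    have := hyST.ent_bounds h1 (by omega)
    omega
  -- monotonicity of f on the two blocks
  have hm1f : ∀ i j, 0 < i → i < j → j ≤ r → ent f i < ent f j := by
    intro i j h1 h2 h3
    exact hfbi 0 (by simp) i j (by simpa using h1) h2 (by simpa using h3)
  have hm2f : ∀ i j, r < i → i < j → j ≤ r + s → ent f i < ent f j := by
    intro i j h1 h2 h3
    exact hfbi 1 (by simp) i j (by simpa using h1) h2 (by simp; omega)
  -- injectivity of f
  have hnd : f.Nodup := perm_nodup hfST (by omega)
  have hFinj : ∀ i j, 1 ≤ i → i ≤ r + s → 1 ≤ j → j ≤ r + s → ent f i = ent f j → i = j := by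
    intro i j hi1 hi2 hj1 hj2 h
    exact ent_inj hnd hi1 (by omega) hj1 (by omega) h
  -- f(r) = r+s
  have hFr : ent f r = r + s := by
    obtain ⟨i₀, hi₀1, hi₀2, hi₀3⟩ := hfST.surj (k := r + s) (by omega) (by omega)
    rw [hflen] at hi₀2
    have hbr := (hFb r (by omega) (by omega)).2
    rcases le_or_gt i₀ r with h | h
    · rcases eq_or_lt_of_le h with rfl | h'
      · exact hi₀3
      · have := hm1f i₀ r hi₀1 h' le_rfl
        omega
    · rcases eq_or_lt_of_le hi₀2 with h' | h'
      · rw [h'] at hi₀3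
        omega
      · have := hm2f i₀ (r + s) h h' le_rfl
        omega
  -- k ≤ f(k) on the first block
  have hFk : ∀ k, 1 ≤ k → k ≤ r → k ≤ ent f k := by
    intro k
    induction k with
    | zero => omega
    | succ k ih =>
      intro _ h2
      rcases Nat.eq_zero_or_pos k with rfl | hk
      · exact (hFb 1 le_rfl (by omega)).1
      · have h1 := ih (by omega) (by omega)
        have := hm1f k (k+1) (by omega) (by omega) h2
        omega
  -- entries of z
  have hzent1 : ∀ i, 1 ≤ i → i ≤ n → ent (wcomp f (cat x y)) i = ent f (ent x i) := by
    intro i h1 h2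
    rw [ent_wcomp h1 (by rw [cat_length, hxlen, hylen]; omega), ent_cat_left h1 (by omega)]
  have hzent2 : ∀ j, 1 ≤ j → j ≤ m → ent (wcomp f (cat x y)) (n + j) = ent f (ent y j + r) := by
    intro j h1 h2
    rw [ent_wcomp (by omega) (by rw [cat_length, hxlen, hylen]; omega),
      ent_cat_right (by omega) (by rw [hxlen, hylen]; omega)]
    rw [hxlen, hxrk, show n + j - n = j by omega]
  -- rank of z
  have hzrk : rk (wcomp f (cat x y)) = r + s := by
    apply rk_eq_of_s18
    · intro i h1 h2
      rw [wcomp_length, cat_length, hxlen, hylen] at h2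
      rcases le_or_gt i n with h | h
      · rw [hzent1 i h1 h]
        have hb := hxent i h1 h
        exact (hFb _ hb.1 (by omega)).2
      · have hz := hzent2 (i - n) (by omega) (by omega)
        rw [show n + (i - n) = i by omega] at hz
        rw [hz]
        have hb := hyent (i - n) (by omega) (by omega)
        exact (hFb _ (by omega) (by omega)).2
    · obtain ⟨i, h1, h2, h3⟩ := hxST.surj (k := r) hr1 (by omega)
      refine ⟨i, h1, by rw [wcomp_length, cat_length]; omega, ?_⟩
      rw [hzent1 i h1 (by omega), h3, hFr]
  -- z is a surjection
  have hzST : IsST (wcomp f (cat x y)) := by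
    refine ⟨?_, ?_⟩
    · intro h
      have hl := congrArg List.length h
      rw [wcomp_length, cat_length] at hl
      simp only [List.length_nil] at hl
      omega
    · intro k
      rw [hzrk]
      constructor
      · intro hk
        obtain ⟨i, h1, h2, rfl⟩ := exists_ent_of_mem hk
        rw [wcomp_length, cat_length, hxlen, hylen] at h2
        rcases le_or_gt i n with h | h
        · rw [hzent1 i h1 h]
          have hb := hxent i h1 h
          exact hFb _ hb.1 (by omega)
        · have hz := hzent2 (i - n) (by omega) (by omega)
          rw [show n + (i - n) = i by omega] at hz
          rw [hz]
          have hb := hyent (i - n) (by omega) (by omega)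
          exact hFb _ (by omega) (by omega)
      · rintro ⟨hk1, hk2⟩
        obtain ⟨j, hj1, hj2, hj3⟩ := hfST.surj (k := k) hk1 (by omega)
        rw [hflen] at hj2
        rcases le_or_gt j r with h | h
        · obtain ⟨i, h1, h2, h3⟩ := hxST.surj (k := j) hj1 (by omega)
          have hz := hzent1 i h1 (by omega)
          rw [h3, hj3] at hz
          rw [← hz]
          exact ent_mem h1 (by rw [wcomp_length, cat_length]; omega)
        · obtain ⟨i, h1, h2, h3⟩ := hyST.surj (k := j - r) (by omega) (by omega)
          have hz := hzent2 i h1 (by omega)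
          rw [h3, show j - r + r = j by omega, hj3] at hz
          rw [← hz]
          exact ent_mem (by omega) (by rw [wcomp_length, cat_length]; omega)
  -- max value characterization
  have hZmax : ∀ i, 1 ≤ i → i ≤ n + m →
      (ent (wcomp f (cat x y)) i = r + s ↔ i ≤ n ∧ ent x i = r) := by
    intro i h1 h2
    constructor
    · intro h
      rcases le_or_gt i n with hin | hin
      · refine ⟨hin, ?_⟩
        have hz := hzent1 i h1 hin
        have hx' := hxent i h1 hin
        exact hFinj (ent x i) r hx'.1 (by omega) (by omega) (by omega) (by rw [← hz, h, hFr])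
      · exfalso
        have hz := hzent2 (i - n) (by omega) (by omega)
        rw [show n + (i - n) = i by omega] at hz
        have hy' := hyent (i - n) (by omega) (by omega)
        have heq : ent y (i - n) + r = r :=
          hFinj _ r (by omega) (by omega) (by omega) (by omega) (by rw [← hz, h, hFr])
        omega
    · rintro ⟨hin, hxi'⟩
      rw [hzent1 i h1 hin, hxi', hFr]
  refine ⟨hzST, ?_⟩
  rintro ⟨a, b, haST, hbST, hzeq⟩
  have hu1 : 1 ≤ rk a := haST.one_le_rk
  have hv1 : 1 ≤ rk b := hbST.one_le_rk
  have hp1 : 1 ≤ a.length := haST.one_le_length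
  have hq1 : 1 ≤ b.length := hbST.one_le_length
  have hlen : n + m = a.length + b.length := by
    have hl := congrArg List.length hzeq
    rw [wcomp_length, cat_length, dotW_length, hxlen, hylen] at hl
    exact hl
  have hD1 : ∀ i, 1 ≤ i → i ≤ a.length →
      ent (wcomp f (cat x y)) i = if ent a i < rk a then ent a i else rk a + rk b - 1 := by
    intro i h1 h2
    rw [hzeq]
    exact ent_dotW_left h1 h2
  have hD2 : ∀ j, 1 ≤ j → j ≤ b.length →
      ent (wcomp f (cat x y)) (a.length + j) =
        if ent b j < rk b then ent b j + rk a - 1 else rk a + rk b - 1 := by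
    intro j h1 h2
    rw [hzeq]
    have hh := ent_dotW_right (a := a) (b := b) (i := a.length + j) (by omega) (by omega)
    rwa [show a.length + j - a.length = j by omega] at hh
  -- rank of dotW a b
  have hdrk : rk (dotW a b) = rk a + rk b - 1 := by
    apply rk_eq_of_s18
    · intro i h1 h2
      rw [dotW_length] at h2
      rcases le_or_gt i a.length with h | h
      · rw [ent_dotW_left h1 h]
        have hb := haST.ent_bounds h1 h
        split <;> omega
      · rw [ent_dotW_right h h2]
        have hb := hbST.ent_bounds (i := i - a.length) (by omega) (by omega)
        split <;> omega
    · obtain ⟨i, h1, h2, h3⟩ := haST.surj (k := rk a) hu1 le_rfl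
      refine ⟨i, h1, by rw [dotW_length]; omega, ?_⟩
      rw [ent_dotW_left h1 h2, h3, if_neg (lt_irrefl _)]
  have huv : rk a + rk b - 1 = r + s := by rw [← hdrk, ← hzeq, hzrk]
  -- p < n, and x attains r past p
  obtain ⟨j₀, hj₀1, hj₀2, hj₀3⟩ := hbST.surj (k := rk b) hv1 le_rfl
  have hcj : ent (wcomp f (cat x y)) (a.length + j₀) = r + s := by
    rw [hD2 j₀ hj₀1 hj₀2, hj₀3, if_neg (lt_irrefl _)]
    exact huv
  have hpj := (hZmax (a.length + j₀) (by omega) (by omega)).1 hcj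
  have hpn : a.length < n := by omega
  -- f maps (r, r+s] into [rk a, r+s-1]
  have hB : ∀ j, r < j → j ≤ r + s → rk a ≤ ent f j ∧ ent f j < r + s := by
    intro j h1 h2
    obtain ⟨k, hk1, hk2, hk3⟩ := hyST.surj (k := j - r) (by omega) (by omega)
    rw [hylen] at hk2
    have hz := hzent2 k hk1 hk2
    rw [hk3, show j - r + r = j by omega] at hz
    have hne : ent f j ≠ r + s := by
      intro h
      have := (hZmax (n + k) (by omega) (by omega)).1 (by rw [hz, h])
      omega
    have hd := hD2 (n + k - a.length) (by omega) (by omega)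
    rw [show a.length + (n + k - a.length) = n + k by omega, hz] at hd
    have hbb := hbST.ent_bounds (i := n + k - a.length) (by omega) (by omega)
    rcases lt_or_ge (ent b (n + k - a.length)) (rk b) with h | h
    · rw [if_pos h] at hd
      omega
    · rw [if_neg (by omega)] at hd
      omega
  -- counting: rk a ≤ r
  have hcard : s ≤ r + s - 1 - (rk a - 1) := by
    have hmaps : ∀ j ∈ Finset.Ioc r (r + s), ent f j ∈ Finset.Ioc (rk a - 1) (r + s - 1) := by
      intro j hj
      rw [Finset.mem_Ioc] at hj ⊢
      have := hB j hj.1 hj.2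
      omega
    have hinj : Set.InjOn (fun j => ent f j) (Finset.Ioc r (r + s)) := by
      intro i hi j hj h
      rw [Finset.coe_Ioc, Set.mem_Ioc] at hi hj
      exact hFinj i j (by omega) hi.2 (by omega) hj.2 h
    have := Finset.card_le_card_of_injOn _ hmaps hinj
    rw [Nat.card_Ioc, Nat.card_Ioc] at this
    omega
  have hur : rk a ≤ r := by omega
  -- f(j) = j for j ≤ rk a - 1
  have hid : ∀ j, 1 ≤ j → j ≤ rk a - 1 → ent f j = j := by
    intro j
    induction j using Nat.strong_induction_on with
    | _ j ih =>
      intro h1 h2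
      obtain ⟨k, hk1, hk2, hk3⟩ := hfST.surj (k := j) h1 (by omega)
      rw [hflen] at hk2
      have hkr : k ≤ r := by
        by_contra h
        have := hB k (by omega) (by omega)
        omega
      have hkj : k ≤ j := by
        have := hFk k hk1 hkr
        omega
      rcases eq_or_lt_of_le hkj with rfl | hlt
      · exact hk3
      · have := ih k hlt hk1 (by omega)
        omega
  have hflow : ∀ j, 1 ≤ j → j ≤ r + s → ent f j ≤ rk a - 1 → j ≤ rk a - 1 := by
    intro j h1 h2 h3
    have hb := (hFb j h1 h2).1
    have h4 := hid (ent f j) hb h3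
    have := hFinj j (ent f j) h1 h2 hb (by omega) (by omega)
    omega
  -- structure on the first block
  have hA : ∀ i, 1 ≤ i → i ≤ a.length →
      (ent x i < rk a ∧ ent a i = ent x i) ∨ (ent x i = r ∧ ent a i = rk a) := by
    intro i h1 h2
    have hz := hzent1 i h1 (by omega)
    have hd := hD1 i h1 h2
    rw [hz] at hd
    have hxb := hxent i h1 (by omega)
    have hab := haST.ent_bounds h1 h2
    rcases lt_or_ge (ent a i) (rk a) with h | h
    · rw [if_pos h] at hd
      have hxu : ent x i ≤ rk a - 1 := hflow (ent x i) hxb.1 (by omega) (by omega)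
      have := hid (ent x i) hxb.1 hxu
      left
      omega
    · rw [if_neg (by omega)] at hd
      right
      have hxr' : ent x i = r :=
        hFinj (ent x i) r hxb.1 (by omega) (by omega) (by omega) (by rw [hd, hFr]; exact huv)
      omega
  -- second block values are ≥ rk a
  have hBlk2 : ∀ i, a.length < i → i ≤ n → rk a ≤ ent x i := by
    intro i h1 h2
    have hz := hzent1 i (by omega) h2
    have hd := hD2 (i - a.length) (by omega) (by omega)
    rw [show a.length + (i - a.length) = i by omega, hz] at hd
    by_contra hh
    have hxb := hxent i (by omega) h2
    have h5 := hid (ent x i) hxb.1 (by omega)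
    rw [h5] at hd
    have hbb := hbST.ent_bounds (i := i - a.length) (by omega) (by omega)
    rcases lt_or_ge (ent b (i - a.length)) (rk b) with h | h
    · rw [if_pos h] at hd
      omega
    · rw [if_neg (by omega)] at hd
      omega
  -- surjectivity of the second block onto [rk a, r]
  have hsurj2 : ∀ w, rk a ≤ w → w ≤ r → ∃ i, a.length < i ∧ i ≤ n ∧ ent x i = w := by
    intro w hw1 hw2
    rcases eq_or_lt_of_le hw2 with heq | hwr
    · exact ⟨a.length + j₀, by omega, hpj.1, by rw [hpj.2, heq]⟩
    · obtain ⟨i, h1, h2, h3⟩ := hxST.surj (k := w) (by omega) (by omega)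
      refine ⟨i, ?_, by omega, h3⟩
      by_contra hip
      rcases hA i h1 (by omega) with h | h <;> omega
  -- surjectivity of the first block onto [1, rk a - 1], and r attained there
  have hsurj1 : ∀ w, 1 ≤ w → w ≤ rk a - 1 → ∃ i, 1 ≤ i ∧ i ≤ a.length ∧ ent x i = w := by
    intro w h1 h2
    obtain ⟨i, hi1, hi2, hi3⟩ := haST.surj (k := w) h1 (by omega)
    rcases hA i hi1 hi2 with h | h
    · exact ⟨i, hi1, hi2, by omega⟩
    · omega
  have hexu : ∃ i, 1 ≤ i ∧ i ≤ a.length ∧ ent x i = r := by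
    obtain ⟨i, hi1, hi2, hi3⟩ := haST.surj (k := rk a) hu1 le_rfl
    rcases hA i hi1 hi2 with h | h
    · omega
    · exact ⟨i, hi1, hi2, h.1⟩
  -- entries of the take/drop pieces
  have htake : ∀ i, 1 ≤ i → i ≤ a.length → ent (x.take a.length) i = ent x i := by
    intro i h1 h2
    rw [ent_eq_getElem (l := x.take a.length) h1 (by rw [List.length_take]; omega),
      ent_eq_getElem (l := x) h1 (by omega), List.getElem_take]
  have hdrop : ∀ j, 1 ≤ j → j ≤ n - a.length →
      ent (x.drop a.length) j = ent x (a.length + j) := by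
    intro j h1 h2
    unfold ent
    rw [List.getD_eq_getElem?_getD, List.getD_eq_getElem?_getD, List.getElem?_drop,
      show a.length + (j - 1) = a.length + j - 1 by omega]
  -- the two candidate factors
  have hAent : ∀ i, 1 ≤ i → i ≤ a.length →
      ent ((x.take a.length).map (fun w => if w < rk a then w else rk a)) i =
        if ent x i < rk a then ent x i else rk a := by
    intro i h1 h2
    rw [ent_map h1 (by rw [List.length_take]; omega), htake i h1 h2]
  have hBent : ∀ j, 1 ≤ j → j ≤ n - a.length →
      ent ((x.drop a.length).map (fun w => w - (rk a - 1))) j =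
        ent x (a.length + j) - (rk a - 1) := by
    intro j h1 h2
    rw [ent_map h1 (by rw [List.length_drop]; omega), hdrop j h1 h2]
  have hAlen : ((x.take a.length).map (fun w => if w < rk a then w else rk a)).length
      = a.length := by
    rw [List.length_map, List.length_take]
    omega
  have hBlen : ((x.drop a.length).map (fun w => w - (rk a - 1))).length = n - a.length := by
    rw [List.length_map, List.length_drop, hxlen]
  have hArk : rk ((x.take a.length).map (fun w => if w < rk a then w else rk a)) = rk a := by
    apply rk_eq_of_s18
    · intro i h1 h2
      rw [hAlen] at h2
      rw [hAent i h1 h2]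
      split <;> omega
    · obtain ⟨i, h1, h2, h3⟩ := hexu
      refine ⟨i, h1, by omega, ?_⟩
      rw [hAent i h1 h2, h3, if_neg (by omega)]
  have hBrk : rk ((x.drop a.length).map (fun w => w - (rk a - 1))) = r - rk a + 1 := by
    apply rk_eq_of_s18
    · intro j h1 h2
      rw [hBlen] at h2
      rw [hBent j h1 h2]
      have hxb := hxent (a.length + j) (by omega) (by omega)
      omega
    · obtain ⟨i, h1, h2, h3⟩ := hsurj2 r hur le_rfl
      refine ⟨i - a.length, by omega, by rw [hBlen]; omega, ?_⟩
      rw [hBent (i - a.length) (by omega) (by omega),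
        show a.length + (i - a.length) = i by omega, h3]
      omega
  have hAST : IsST ((x.take a.length).map (fun w => if w < rk a then w else rk a)) := by
    constructor
    · intro h
      have := congrArg List.length h
      rw [hAlen] at this
      simp only [List.length_nil] at this
      omega
    · intro k
      rw [hArk]
      constructor
      · intro hk
        obtain ⟨i, h1, h2, rfl⟩ := exists_ent_of_mem hk
        rw [hAlen] at h2
        rw [hAent i h1 h2]
        have hxb := hxent i h1 (by omega)
        split <;> omega
      · rintro ⟨hk1, hk2⟩
        rcases eq_or_lt_of_le hk2 with heq | hku
        · obtain ⟨i, h1, h2, h3⟩ := hexu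
          have he : ent ((x.take a.length).map (fun w => if w < rk a then w else rk a)) i
              = k := by
            rw [hAent i h1 h2, h3, if_neg (by omega), heq]
          rw [← he]
          exact ent_mem h1 (by omega)
        · obtain ⟨i, h1, h2, h3⟩ := hsurj1 k hk1 (by omega)
          have he : ent ((x.take a.length).map (fun w => if w < rk a then w else rk a)) i
              = k := by
            rw [hAent i h1 h2, h3, if_pos (by omega)]
          rw [← he]
          exact ent_mem h1 (by omega)
  have hBST : IsST ((x.drop a.length).map (fun w => w - (rk a - 1))) := by
    constructor
    · intro h
      have := congrArg List.length h
      rw [hBlen] at this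
      simp only [List.length_nil] at this
      omega
    · intro k
      rw [hBrk]
      constructor
      · intro hk
        obtain ⟨j, h1, h2, rfl⟩ := exists_ent_of_mem hk
        rw [hBlen] at h2
        rw [hBent j h1 h2]
        have hxb := hxent (a.length + j) (by omega) (by omega)
        have hlb := hBlk2 (a.length + j) (by omega) (by omega)
        omega
      · rintro ⟨hk1, hk2⟩
        obtain ⟨i, h1, h2, h3⟩ := hsurj2 (k + rk a - 1) (by omega) (by omega)
        have he : ent ((x.drop a.length).map (fun w => w - (rk a - 1))) (i - a.length)
            = k := by
          rw [hBent (i - a.length) (by omega) (by omega),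
            show a.length + (i - a.length) = i by omega, h3]
          omega
        rw [← he]
        exact ent_mem (by omega) (by rw [hBlen]; omega)
  -- the decomposition of x, contradiction with indecomposability
  apply hxi.2
  refine ⟨(x.take a.length).map (fun w => if w < rk a then w else rk a),
    (x.drop a.length).map (fun w => w - (rk a - 1)), hAST, hBST, ?_⟩
  apply list_ext_ent
  · rw [hxlen, dotW_length, hAlen, hBlen]
    omega
  · intro i h1 h2
    rw [hxlen] at h2
    rcases le_or_gt i a.length with hip | hip
    · rw [ent_dotW_left h1 (by rw [hAlen]; omega), hAent i h1 hip, hArk, hBrk]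
      rcases hA i h1 hip with h | h <;> split_ifs <;> omega
    · have hd := ent_dotW_right
        (a := (x.take a.length).map (fun w => if w < rk a then w else rk a))
        (b := (x.drop a.length).map (fun w => w - (rk a - 1)))
        (i := i) (by rw [hAlen]; omega) (by rw [hAlen, hBlen]; omega)
      rw [hAlen] at hd
      rw [hd, hBent (i - a.length) (by omega) (by omega),
        show a.length + (i - a.length) = i by omega, hArk, hBrk]
      have hxb := hxent i (by omega) h2
      have hlb := hBlk2 i (by omega) h2
      split_ifs <;> omega

end SurjPerm
end
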